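/- Let S be a reachable set and K = closure{(R, λ) ∈ ℝⁿ⁺¹ : λ > 0, R/λ ∈ S} its liquidity cone. Then K is a closed convex cone containing 0, and it is 'almost upward closed': if (R, λ) ∈ K, R' ≥ R, and 0 ≤ λ' ≤ λ, then (R', λ') ∈ K. -/

import Mathlib

theorem liquidity_cone_props (n : ℕ) (S : Set (Fin n → ℝ))
    (hS0 : ∀ R ∈ S, 0 ≤ R) (hS1 : S.Nonempty) (hS2 : IsClosed S) (hS3 : Convex ℝ S)
    (hS4 : ∀ R ∈ S, ∀ R' : Fin n → ℝ, R ≤ R' → R' ∈ S)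
    (K : Set ((Fin n → ℝ) × ℝ))
    (hK : K = closure {p : (Fin n → ℝ) × ℝ | 0 < p.2 ∧ p.2⁻¹ • p.1 ∈ S}) :
    IsClosed K ∧ Convex ℝ K ∧ (0 : (Fin n → ℝ) × ℝ) ∈ K ∧
      (∀ (p : (Fin n → ℝ) × ℝ), p ∈ K → ∀ a : ℝ, 0 ≤ a → a • p ∈ K) ∧
      (∀ (R R' : Fin n → ℝ) (lam lam' : ℝ), (R, lam) ∈ K → R ≤ R' → 0 ≤ lam' → lam' ≤ lam →
        (R', lam') ∈ K) := by
  set P : Set ((Fin n → ℝ) × ℝ) := {p | 0 < p.2 ∧ p.2⁻¹ • p.1 ∈ S} with hPdef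
  subst hK
  -- convexity of P
  have hPconv : Convex ℝ P := by
    rintro ⟨R1, l1⟩ ⟨h1, hs1⟩ ⟨R2, l2⟩ ⟨h2, hs2⟩ a b ha hb hab
    simp only [hPdef, Set.mem_setOf_eq, Prod.smul_mk, Prod.mk_add_mk, smul_eq_mul] at *
    have hl : 0 < a * l1 + b * l2 := by
      rcases ha.lt_or_eq with h | h
      · have := mul_pos h h1
        nlinarith [mul_nonneg hb h2.le]
      · have hb1 : b = 1 := by linarith
        rw [← h, hb1]; simpa using h2
    refine ⟨hl, ?_⟩
    have hw1 : (0:ℝ) ≤ a * l1 / (a * l1 + b * l2) :=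
      div_nonneg (mul_nonneg ha h1.le) hl.le
    have hw2 : (0:ℝ) ≤ b * l2 / (a * l1 + b * l2) :=
      div_nonneg (mul_nonneg hb h2.le) hl.le
    have hw : a * l1 / (a * l1 + b * l2) + b * l2 / (a * l1 + b * l2) = 1 := by
      field_simp
    have hmem := hS3 hs1 hs2 hw1 hw2 hw
    have heq : (a * l1 + b * l2)⁻¹ • (a • R1 + b • R2)
        = (a * l1 / (a * l1 + b * l2)) • l1⁻¹ • R1
          + (b * l2 / (a * l1 + b * l2)) • l2⁻¹ • R2 := by
      funext i
      simp only [Pi.add_apply, Pi.smul_apply, smul_eq_mul]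
      field_simp
    rw [heq]; exact hmem
  -- 0 ∈ closure P
  have h0 : (0 : (Fin n → ℝ) × ℝ) ∈ closure P := by
    obtain ⟨R0, hR0⟩ := hS1
    have hmemk : ∀ k : ℕ, (((k+1:ℝ)⁻¹ • R0, (k+1:ℝ)⁻¹) : (Fin n → ℝ) × ℝ) ∈ P := by
      intro k
      have hk : (0:ℝ) < (k+1:ℝ)⁻¹ := by positivity
      refine ⟨hk, ?_⟩
      have heq : ((k+1:ℝ)⁻¹)⁻¹ • ((k+1:ℝ)⁻¹ • R0) = R0 := by
        rw [smul_smul, inv_inv, mul_inv_cancel₀ (show (k+1:ℝ) ≠ 0 by positivity), one_smul]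
      rw [heq]; exact hR0
    have htend : Filter.Tendsto (fun k : ℕ => (((k+1:ℝ)⁻¹ • R0, (k+1:ℝ)⁻¹) : (Fin n → ℝ) × ℝ))
        Filter.atTop (nhds 0) := by
      have h1 : Filter.Tendsto (fun k : ℕ => ((k:ℝ)+1)⁻¹) Filter.atTop (nhds 0) := by
        simpa [one_div] using (tendsto_one_div_add_atTop_nhds_zero_nat :
          Filter.Tendsto (fun n : ℕ => 1 / ((n:ℝ) + 1)) Filter.atTop (nhds 0))
      have h2 : Filter.Tendsto (fun k : ℕ => ((k:ℝ)+1)⁻¹ • R0) Filter.atTop (nhds 0) := by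
        simpa using h1.smul_const R0
      exact h2.prodMk_nhds h1
    exact mem_closure_of_tendsto htend (Filter.Eventually.of_forall hmemk)
  -- adding a nonneg vector to first coordinate
  have hadd : ∀ d : Fin n → ℝ, 0 ≤ d → ∀ p ∈ closure P, ((p.1 + d, p.2) : (Fin n → ℝ) × ℝ) ∈ closure P := by
    intro d hd p hp
    have hcont : Continuous fun q : (Fin n → ℝ) × ℝ => ((q.1 + d, q.2) : (Fin n → ℝ) × ℝ) := by
      fun_prop
    refine map_mem_closure (f := fun q : (Fin n → ℝ) × ℝ => ((q.1 + d, q.2) : (Fin n → ℝ) × ℝ)) hcont hp ?_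
    rintro q ⟨hq1, hq2⟩
    refine ⟨hq1, hS4 _ hq2 _ ?_⟩
    intro i
    simp only [Pi.smul_apply, Pi.add_apply, smul_eq_mul]
    have hinv : (0:ℝ) ≤ q.2⁻¹ := inv_nonneg.mpr hq1.le
    nlinarith [hd i, mul_nonneg hinv (hd i)]
  -- scaling second coordinate down
  have hscale : ∀ t : ℝ, 0 < t → t ≤ 1 → ∀ p ∈ closure P,
      ((p.1, t * p.2) : (Fin n → ℝ) × ℝ) ∈ closure P := by
    intro t ht ht1 p hp
    have hcont : Continuous fun q : (Fin n → ℝ) × ℝ => ((q.1, t * q.2) : (Fin n → ℝ) × ℝ) := by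
      fun_prop
    refine map_mem_closure (f := fun q : (Fin n → ℝ) × ℝ => ((q.1, t * q.2) : (Fin n → ℝ) × ℝ)) hcont hp ?_
    rintro q ⟨hq1, hq2⟩
    refine ⟨mul_pos ht hq1, hS4 _ hq2 _ ?_⟩
    intro i
    simp only [Pi.smul_apply, smul_eq_mul, mul_inv]
    have hnn : 0 ≤ q.2⁻¹ * q.1 i := by
      have := hS0 _ hq2 i
      simpa using this
    have hti : (1:ℝ) ≤ t⁻¹ := (one_le_inv₀ ht).2 ht1
    calc q.2⁻¹ * q.1 i = 1 * (q.2⁻¹ * q.1 i) := by ring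
      _ ≤ t⁻¹ * (q.2⁻¹ * q.1 i) := by exact mul_le_mul_of_nonneg_right hti hnn
      _ = t⁻¹ * q.2⁻¹ * q.1 i := by ring
  refine ⟨isClosed_closure, hPconv.closure, h0, ?_, ?_⟩
  · -- cone
    intro p hp a ha
    rcases ha.lt_or_eq with hpos | h0a
    · have hcont : Continuous fun q : (Fin n → ℝ) × ℝ => a • q := by fun_prop
      refine map_mem_closure hcont hp ?_
      rintro q ⟨hq1, hq2⟩
      refine ⟨by simpa using mul_pos hpos hq1, ?_⟩
      have : ((a • q).2)⁻¹ • (a • q).1 = q.2⁻¹ • q.1 := by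
        simp only [Prod.smul_snd, Prod.smul_fst, smul_eq_mul, mul_inv, smul_smul]
        congr 1
        field_simp
      rw [this]; exact hq2
    · rw [← h0a, zero_smul]; exact h0
  · -- upward
    intro R R' lam lam' hmem hR hl' hll
    have hstep : ((R', lam) : (Fin n → ℝ) × ℝ) ∈ closure P := by
      have hd : (0 : Fin n → ℝ) ≤ R' - R := fun i => by
        simpa using sub_nonneg.2 (hR i)
      have := hadd (R' - R) hd (R, lam) hmem
      simpa using this
    rcases hll.lt_or_eq with hlt | heq
    · have hlampos : 0 < lam := lt_of_le_of_lt hl' hlt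
      rcases hl'.lt_or_eq with hpos | h0l
      · have := hscale (lam'/lam) (div_pos hpos hlampos)
          ((div_le_one hlampos).2 hlt.le) (R', lam) hstep
        simpa [div_mul_cancel₀ _ hlampos.ne'] using this
      · rw [← h0l]
        have hk : ∀ k : ℕ, ((R', ((k:ℝ)+1)⁻¹ * lam) : (Fin n → ℝ) × ℝ) ∈ closure P := by
          intro k
          have hkpos : (0:ℝ) < ((k:ℝ)+1)⁻¹ := by positivity
          have hkle : ((k:ℝ)+1)⁻¹ ≤ 1 := by
            rw [inv_le_one_iff₀]; right; linarith [Nat.cast_nonneg (α := ℝ) k]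
          exact hscale _ hkpos hkle (R', lam) hstep
        have htend : Filter.Tendsto (fun k : ℕ => ((R', ((k:ℝ)+1)⁻¹ * lam) : (Fin n → ℝ) × ℝ))
            Filter.atTop (nhds (R', 0)) := by
          have h1 : Filter.Tendsto (fun k : ℕ => ((k:ℝ)+1)⁻¹) Filter.atTop (nhds 0) := by
            simpa [one_div] using (tendsto_one_div_add_atTop_nhds_zero_nat :
          Filter.Tendsto (fun n : ℕ => 1 / ((n:ℝ) + 1)) Filter.atTop (nhds 0))
          have h2 : Filter.Tendsto (fun k : ℕ => ((k:ℝ)+1)⁻¹ * lam) Filter.atTop (nhds 0) := by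
            simpa using h1.mul_const lam
          exact (tendsto_const_nhds.prodMk_nhds h2)
        exact isClosed_closure.mem_of_tendsto htend (Filter.Eventually.of_forall hk)
    · rw [heq]; exact hstep
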